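/- The group G = ⟨a, b⟩ is a torsion group: every element of G has finite order. -/

import Mathlib

/-!
Setup: the automorphism group `Aut(T₈)` of the rooted 8-regular tree, realized
as the group of *portraits*: an automorphism is determined by the permutation
of `{1,…,8}` (here `Fin 8`) that it induces below each vertex (a finite word
over the alphabet).  Composition is written left-to-right: `p * q` acts by
first applying `p`, then `q` (this is the convention of the paper, where a
word `a b a b⁻¹ a` acts by applying `a` first).
-/

namespace T8

/-- The root permutation of the generator `a` : `(34)(67)(58)` on letters
`1,…,8`, written `0`-indexed on `Fin 8` as `(2 3)(5 6)(4 7)`. -/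
def σa : Equiv.Perm (Fin 8) := Equiv.swap 2 3 * Equiv.swap 5 6 * Equiv.swap 4 7

/-- The root permutation of the generator `b` : `(123)(456)` on letters
`1,…,8`, written `0`-indexed on `Fin 8` as `(0 1 2)(3 4 5)`. -/
def σb : Equiv.Perm (Fin 8) :=
  (Equiv.swap 0 1 * Equiv.swap 1 2) * (Equiv.swap 3 4 * Equiv.swap 4 5)

/-- An automorphism of the rooted `8`-regular tree, given by its portrait:
for each vertex `v` (a finite word over the `8`-letter alphabet), the
permutation induced on the letters just below `v`. -/
@[ext] structure Aut where
  val : List (Fin 8) → Equiv.Perm (Fin 8)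

/-- The section (state) of a tree automorphism at a first-level vertex `i`. -/
def sect (p : Aut) (i : Fin 8) : Aut := ⟨fun v => p.val (i :: v)⟩

/-- The section of a tree automorphism at an arbitrary vertex (word) `v`. -/
def sectWord (p : Aut) : List (Fin 8) → Aut
  | [] => p
  | i :: t => sectWord (sect p i) t

/-- The action of a tree automorphism on vertices:
`p (i·w) = (σ_p i) · (p_i w)` where `σ_p = p.val []` is the root permutation
and `p_i` is the section at `i`.  This is length- and prefix-preserving. -/
def act : Aut → List (Fin 8) → List (Fin 8)
  | _, [] => []
  | p, i :: t => p.val [] i :: act (sect p i) t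

/-- The action of the inverse of a tree automorphism on vertices. -/
def actInv : Aut → List (Fin 8) → List (Fin 8)
  | _, [] => []
  | p, i :: t => (p.val [])⁻¹ i :: actInv (sect p ((p.val [])⁻¹ i)) t

instance : One Aut := ⟨⟨fun _ => 1⟩⟩
instance : Mul Aut := ⟨fun p q => ⟨fun v => q.val (act p v) * p.val v⟩⟩
instance : Inv Aut := ⟨fun p => ⟨fun v => (p.val (actInv p v))⁻¹⟩⟩

@[simp] lemma one_val (v : List (Fin 8)) : (1 : Aut).val v = 1 := rfl
@[simp] lemma mul_val (p q : Aut) (v : List (Fin 8)) :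
    (p * q).val v = q.val (act p v) * p.val v := rfl
@[simp] lemma inv_val (p : Aut) (v : List (Fin 8)) :
    (p⁻¹).val v = (p.val (actInv p v))⁻¹ := rfl

@[simp] lemma sect_one (i : Fin 8) : sect 1 i = 1 := rfl

lemma sect_mul (p q : Aut) (i : Fin 8) :
    sect (p * q) i = sect p i * sect q (p.val [] i) := rfl

lemma sect_inv (p : Aut) (i : Fin 8) :
    sect p⁻¹ i = (sect p ((p.val [])⁻¹ i))⁻¹ := rfl

lemma act_one : ∀ v : List (Fin 8), act (1 : Aut) v = v
  | [] => rfl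
  | i :: t => by
    show (1 : Equiv.Perm (Fin 8)) i :: act (sect 1 i) t = i :: t
    rw [sect_one, act_one t, Equiv.Perm.one_apply]

lemma act_mul : ∀ (v : List (Fin 8)) (p q : Aut),
    act (p * q) v = act q (act p v)
  | [], _, _ => rfl
  | i :: t, p, q => by
    show (p * q).val [] i :: act (sect (p * q) i) t
        = act q (p.val [] i :: act (sect p i) t)
    rw [sect_mul, act_mul t]
    show (q.val (act p []) * p.val []) i :: _
        = q.val [] (p.val [] i) :: act (sect q (p.val [] i)) (act (sect p i) t)
    rfl

lemma act_inv : ∀ (v : List (Fin 8)) (p : Aut), act p⁻¹ v = actInv p v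
  | [], _ => rfl
  | i :: t, p => by
    show (p⁻¹).val [] i :: act (sect p⁻¹ i) t
        = (p.val [])⁻¹ i :: actInv (sect p ((p.val [])⁻¹ i)) t
    rw [sect_inv, act_inv t]
    rfl

lemma actInv_act : ∀ (v : List (Fin 8)) (p : Aut), actInv p (act p v) = v
  | [], _ => rfl
  | i :: t, p => by
    show (p.val [])⁻¹ (p.val [] i) ::
        actInv (sect p ((p.val [])⁻¹ (p.val [] i))) (act (sect p i) t) = i :: t
    rw [Equiv.Perm.inv_def, Equiv.symm_apply_apply, actInv_act t]

lemma act_actInv : ∀ (v : List (Fin 8)) (p : Aut), act p (actInv p v) = v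
  | [], _ => rfl
  | i :: t, p => by
    show p.val [] ((p.val [])⁻¹ i) ::
        act (sect p ((p.val [])⁻¹ i)) (actInv (sect p ((p.val [])⁻¹ i)) t) = i :: t
    rw [Equiv.Perm.inv_def, Equiv.apply_symm_apply, act_actInv t]

instance : Group Aut where
  mul_assoc p q r := by
    ext v i
    simp [mul_val, act_mul, mul_assoc]
  one_mul p := by
    ext v i
    simp [mul_val, act_one]
  mul_one p := by
    ext v i
    simp [mul_val]
  inv_mul_cancel p := by
    ext v i
    simp [mul_val, inv_val, act_inv, actInv_act]

/-- The portrait of the generator `a = ⟨a, 1, 1, 1, 1, 1, 1, 1⟩ (34)(67)(58)`: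
root permutation `σa`, section `a` at the first letter, trivial sections
elsewhere. -/
def aval : List (Fin 8) → Equiv.Perm (Fin 8)
  | [] => σa
  | i :: t => if i = 0 then aval t else 1

/-- The generator `a = ⟨a, 1, 1, 1, 1, 1, 1, 1⟩ (34)(67)(58)`. -/
def a : Aut := ⟨aval⟩

/-- The portraits of the generator `b` (for `tt`) and of `b⁻¹` (for `ff`):
`b = ⟨1, 1, 1, 1, 1, 1, b, b⁻¹⟩ (123)(456)` and
`b⁻¹ = ⟨1, 1, 1, 1, 1, 1, b⁻¹, b⟩ (132)(465)`. -/
def bval : Bool → List (Fin 8) → Equiv.Perm (Fin 8)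
  | s, [] => if s then σb else σb⁻¹
  | s, i :: t => if i = 6 then bval s t else if i = 7 then bval (!s) t else 1

/-- The generator `b = ⟨1, 1, 1, 1, 1, 1, b, b⁻¹⟩ (123)(456)`. -/
def b : Aut := ⟨bval true⟩

/-- Sanity: the first section of `a` is `a` itself. -/
lemma sect_a_zero : sect a 0 = a := rfl

/-- Sanity: the section of `b` at the letter `7` (index `6`) is `b` itself. -/
lemma sect_b_six : sect b 6 = b := rfl

/-- The group `G = ⟨a, b⟩ = ⟨a, b, b⁻¹⟩ ≤ Aut(T₈)` of the paper. -/
def G : Subgroup Aut := Subgroup.closure {a, b}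

lemma a_mem : a ∈ G := Subgroup.subset_closure (Set.mem_insert _ _)

lemma b_mem : b ∈ G := Subgroup.subset_closure (Set.mem_insert_of_mem _ rfl)

end T8

namespace T8

/-! ### Auxiliary development for the torsion theorem -/

/-- Extensionality via portrait values. -/
lemma eq_of_val (p q : Aut) (h : ∀ v, p.val v = q.val v) : p = q := by
  ext v i
  rw [h v]

lemma val_cons (p : Aut) (i : Fin 8) (t : List (Fin 8)) :
    p.val (i :: t) = (sect p i).val t := rfl

lemma root_mul (p q : Aut) : (p * q).val [] = q.val [] * p.val [] := rfl

/-- `b⁻¹` as a portrait. -/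
def b' : Aut := ⟨bval false⟩

lemma sect_a (i : Fin 8) : sect a i = if i = 0 then a else 1 := by
  split
  · subst ‹i = 0›; rfl
  · refine eq_of_val _ _ fun v => ?_
    show aval (i :: v) = _
    rw [aval, if_neg ‹i ≠ 0›]; rfl

lemma sect_b_gen (s : Bool) (i : Fin 8) :
    sect ⟨bval s⟩ i = if i = 6 then ⟨bval s⟩ else if i = 7 then ⟨bval (!s)⟩ else 1 := by
  split
  · subst ‹i = 6›; rfl
  · split
    · subst ‹i = 7›; rfl
    · refine eq_of_val _ _ fun v => ?_
      show bval s (i :: v) = _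
      rw [bval, if_neg ‹i ≠ 6›, if_neg ‹i ≠ 7›]; rfl

lemma sect_b (i : Fin 8) : sect b i = if i = 6 then b else if i = 7 then b' else 1 :=
  sect_b_gen true i

lemma sect_b' (i : Fin 8) : sect b' i = if i = 6 then b' else if i = 7 then b else 1 :=
  sect_b_gen false i

lemma root_a : a.val [] = σa := rfl
lemma root_b : b.val [] = σb := rfl
lemma root_b' : b'.val [] = σb⁻¹ := rfl

lemma sigma_a_zero : σa 0 = 0 := by decide

lemma a_mul_a : a * a = 1 := by
  suffices h : ∀ v, (a * a).val v = (1 : Aut).val v from eq_of_val _ _ h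
  intro v
  induction v with
  | nil =>
    show a.val [] * a.val [] = 1
    rw [root_a]; decide
  | cons i t ih =>
    rw [val_cons, val_cons, sect_mul, root_a, sect_one]
    rcases eq_or_ne i 0 with rfl | hi
    · rw [sigma_a_zero, sect_a, if_pos rfl]
      exact ih
    · have h2 : σa i ≠ 0 := fun h => hi (σa.injective (h.trans sigma_a_zero.symm))
      rw [sect_a, sect_a, if_neg hi, if_neg h2, one_mul]

lemma root_bval (s : Bool) : (⟨bval s⟩ : Aut).val [] = if s then σb else σb⁻¹ := rfl

lemma bval_root_six (s : Bool) : (⟨bval s⟩ : Aut).val [] 6 = 6 := by cases s <;> decide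
lemma bval_root_seven (s : Bool) : (⟨bval s⟩ : Aut).val [] 7 = 7 := by cases s <;> decide

lemma bval_mul_not (s : Bool) : (⟨bval s⟩ * ⟨bval (!s)⟩ : Aut) = 1 := by
  suffices h : ∀ v (s : Bool), (⟨bval s⟩ * ⟨bval (!s)⟩ : Aut).val v = (1 : Aut).val v from
    eq_of_val _ _ (fun v => h v s)
  intro v
  induction v with
  | nil => intro s; show _ * _ = (1 : Equiv.Perm (Fin 8)); cases s <;> decide
  | cons i t ih =>
    intro s
    rw [val_cons, val_cons, sect_mul, sect_one]
    rcases eq_or_ne i 6 with rfl | h6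
    · rw [bval_root_six, sect_b_gen, sect_b_gen, if_pos rfl, if_pos rfl]
      exact ih s
    rcases eq_or_ne i 7 with rfl | h7
    · rw [bval_root_seven, sect_b_gen, sect_b_gen, if_neg (by decide), if_pos rfl,
        if_neg (by decide), if_pos rfl]
      exact ih (!s)
    · have k6 : (⟨bval s⟩ : Aut).val [] i ≠ 6 := fun h =>
        h6 (((⟨bval s⟩ : Aut).val []).injective (h.trans (bval_root_six s).symm))
      have k7 : (⟨bval s⟩ : Aut).val [] i ≠ 7 := fun h =>
        h7 (((⟨bval s⟩ : Aut).val []).injective (h.trans (bval_root_seven s).symm))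
      rw [sect_b_gen, sect_b_gen, if_neg h6, if_neg h7, if_neg k6, if_neg k7, one_mul]

lemma bval_mul_self (s : Bool) : (⟨bval s⟩ * ⟨bval s⟩ : Aut) = ⟨bval (!s)⟩ := by
  suffices h : ∀ v (s : Bool), (⟨bval s⟩ * ⟨bval s⟩ : Aut).val v = (⟨bval (!s)⟩ : Aut).val v from
    eq_of_val _ _ (fun v => h v s)
  intro v
  induction v with
  | nil => intro s; show _ * _ = _; cases s <;> decide
  | cons i t ih =>
    intro s
    rw [val_cons, val_cons, sect_mul]
    rcases eq_or_ne i 6 with rfl | h6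
    · rw [bval_root_six, sect_b_gen, sect_b_gen, if_pos rfl, if_pos rfl]
      exact ih s
    rcases eq_or_ne i 7 with rfl | h7
    · rw [bval_root_seven, sect_b_gen, sect_b_gen, if_neg (by decide), if_pos rfl,
        if_neg (by decide), if_pos rfl]
      exact ih (!s)
    · have k6 : (⟨bval s⟩ : Aut).val [] i ≠ 6 := fun h =>
        h6 (((⟨bval s⟩ : Aut).val []).injective (h.trans (bval_root_six s).symm))
      have k7 : (⟨bval s⟩ : Aut).val [] i ≠ 7 := fun h =>
        h7 (((⟨bval s⟩ : Aut).val []).injective (h.trans (bval_root_seven s).symm))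
      rw [sect_b_gen, sect_b_gen, sect_b_gen, if_neg h6, if_neg h7, if_neg k6, if_neg k7,
        if_neg h6, if_neg h7, one_mul]

lemma b_mul_b' : b * b' = 1 := bval_mul_not true
lemma b'_mul_b : b' * b = 1 := bval_mul_not false
lemma b_mul_b : b * b = b' := bval_mul_self true
lemma b'_mul_b' : b' * b' = b := bval_mul_self false

lemma b'_eq_inv : b' = b⁻¹ := eq_inv_of_mul_eq_one_left b'_mul_b

lemma ha : IsOfFinOrder a :=
  isOfFinOrder_iff_pow_eq_one.mpr ⟨2, by norm_num, by rw [pow_two, a_mul_a]⟩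

lemma hbfin : IsOfFinOrder b :=
  isOfFinOrder_iff_pow_eq_one.mpr ⟨3, by norm_num,
    by rw [pow_succ, pow_two, b_mul_b, b'_mul_b]⟩

lemma hb'fin : IsOfFinOrder b' :=
  isOfFinOrder_iff_pow_eq_one.mpr ⟨3, by norm_num,
    by rw [pow_succ, pow_two, b'_mul_b', b_mul_b']⟩
/-! ### Sections of powers and the finite-order criterion -/

lemma root_pow (g : Aut) (k : ℕ) : (g ^ k).val [] = (g.val []) ^ k := by
  induction k with
  | zero => rfl
  | succ k ih => rw [pow_succ, root_mul, ih, ← pow_succ']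

/-- Iterated product of sections along the orbit of a vertex. -/
def sprod (g : Aut) : Fin 8 → ℕ → Aut
  | _, 0 => 1
  | i, k + 1 => sect g i * sprod g (g.val [] i) k

@[simp] lemma sprod_zero (g : Aut) (i : Fin 8) : sprod g i 0 = 1 := rfl

lemma sprod_succ (g : Aut) (i : Fin 8) (k : ℕ) :
    sprod g i (k + 1) = sect g i * sprod g (g.val [] i) k := rfl

lemma sect_pow (g : Aut) (i : Fin 8) (k : ℕ) : sect (g ^ k) i = sprod g i k := by
  induction k generalizing i with
  | zero => exact sect_one i
  | succ k ih => rw [pow_succ', sect_mul, ih, sprod_succ]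

lemma sprod_add (g : Aut) (i : Fin 8) (k l : ℕ) :
    sprod g i (k + l) = sprod g i k * sprod g ((g.val [] ·)^[k] i) l := by
  induction k generalizing i with
  | zero => simp
  | succ k ih =>
    rw [Nat.succ_add, sprod_succ, ih, sprod_succ, mul_assoc,
      Function.iterate_succ_apply]

lemma sprod_one' (g : Aut) (i : Fin 8) : sprod g i 1 = sect g i := by
  rw [sprod_succ, sprod_zero, mul_one]

lemma sprod_right (g : Aut) (i : Fin 8) (k : ℕ) :
    sprod g i (k + 1) = sprod g i k * sect g ((g.val [] ·)^[k] i) := by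
  rw [sprod_add, sprod_one']

lemma iterate_period_mul (f : Fin 8 → Fin 8) (i : Fin 8) (c : ℕ) (h : f^[c] i = i) :
    ∀ q, f^[c * q] i = i := by
  intro q
  induction q with
  | zero => rfl
  | succ q ih => rw [Nat.mul_succ, Function.iterate_add_apply, h, ih]

lemma sprod_pow (g : Aut) (i : Fin 8) (c : ℕ) (h : (g.val [] ·)^[c] i = i) (q : ℕ) :
    sprod g i (c * q) = (sprod g i c) ^ q := by
  induction q with
  | zero => rw [Nat.mul_zero]; rfl
  | succ q ih =>
    rw [Nat.mul_succ, sprod_add, ih, iterate_period_mul _ _ _ h, pow_succ]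

/-- Finite-order criterion: an automorphism whose orbitwise section products
(over some periods) all have finite order, has finite order. -/
lemma finOrder_of_sprod (g : Aut)
    (H : ∀ i : Fin 8, ∃ c : ℕ, 0 < c ∧ (g.val [] ·)^[c] i = i ∧ IsOfFinOrder (sprod g i c)) :
    IsOfFinOrder g := by
  classical
  choose c hc hper hfin using H
  set σ := g.val [] with hσ
  have hm : 0 < orderOf σ := orderOf_pos σ
  set n : Fin 8 → ℕ := fun i => c i * orderOf (sprod g i (c i)) with hn
  have hnpos : ∀ i, 0 < n i := fun i => Nat.mul_pos (hc i) (hfin i).orderOf_pos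
  set M : ℕ := orderOf σ * ∏ i : Fin 8, n i with hM
  have hMpos : 0 < M := Nat.mul_pos hm (Finset.prod_pos fun i _ => hnpos i)
  refine isOfFinOrder_iff_pow_eq_one.mpr ⟨M, hMpos, eq_of_val _ _ fun v => ?_⟩
  induction v with
  | nil =>
    rw [root_pow]
    show σ ^ M = (1 : Aut).val []
    rw [hM, pow_mul, pow_orderOf_eq_one, one_pow]; rfl
  | cons i t _ =>
    rw [val_cons, val_cons, sect_one, sect_pow]
    have hqd : M = c i * (orderOf (sprod g i (c i)) * (orderOf σ * ∏ j ∈ Finset.univ.erase i, n j)) := by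
      rw [hM, ← Finset.mul_prod_erase Finset.univ n (Finset.mem_univ i), hn]
      ring
    rw [hqd, sprod_pow g i (c i) (hper i), pow_mul, pow_orderOf_eq_one, one_pow]
/-! ### Words in the generators -/

/-- Letters: `A` is the generator `a`; `B true` is `b`, `B false` is `b⁻¹`. -/
inductive L : Type
  | A : L
  | B : Bool → L
  deriving DecidableEq

/-- The generator associated to a letter. -/
def gen : L → Aut
  | L.A => a
  | L.B true => b
  | L.B false => b'

/-- Evaluation of a word (letters act left-to-right under `*`,
but we simply take the product in the group). -/
def eval : List L → Aut
  | [] => 1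
  | x :: t => gen x * eval t

@[simp] lemma eval_nil : eval [] = 1 := rfl
@[simp] lemma eval_cons (x : L) (t : List L) : eval (x :: t) = gen x * eval t := rfl

lemma eval_append (u v : List L) : eval (u ++ v) = eval u * eval v := by
  induction u with
  | nil => simp
  | cons x t ih => simp [ih, mul_assoc]

/-- Number of `A`-letters in a word. -/
def na : List L → ℕ
  | [] => 0
  | L.A :: t => na t + 1
  | L.B _ :: t => na t

lemma na_append (u v : List L) : na (u ++ v) = na u + na v := by
  induction u with
  | nil => simp [na]
  | cons x t ih => cases x <;> simp [na, ih] <;> omega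

/-- One-step vertex map of a letter (action on the first level). -/
def stp (x : L) (i : Fin 8) : Fin 8 := (gen x).val [] i

/-- The emitted subword of a letter at a first-level vertex. -/
def lsec : L → Fin 8 → List L
  | L.A, i => if i = 0 then [L.A] else []
  | L.B s, i => if i = 6 then [L.B s] else if i = 7 then [L.B (!s)] else []

/-- The section word of a word at a first-level vertex. -/
def secW : List L → Fin 8 → List L
  | [], _ => []
  | x :: t, i => lsec x i ++ secW t (stp x i)

/-- The end vertex of the trace of a vertex through a word. -/
def trc : List L → Fin 8 → Fin 8
  | [], i => i
  | x :: t, i => trc t (stp x i)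

lemma sect_gen (x : L) (i : Fin 8) : sect (gen x) i = eval (lsec x i) := by
  cases x with
  | A =>
    show sect a i = _
    rw [sect_a, lsec]
    split <;> simp [eval, gen]
  | B s =>
    cases s with
    | true =>
      show sect b i = _
      rw [sect_b, lsec]
      split
      · simp [eval, gen]
      · split <;> simp [eval, gen]
    | false =>
      show sect b' i = _
      rw [sect_b', lsec]
      split
      · simp [eval, gen]
      · split <;> simp [eval, gen]

lemma root_eval (w : List L) (i : Fin 8) : (eval w).val [] i = trc w i := by
  induction w generalizing i with
  | nil => rfl
  | cons x t ih =>
    show ((gen x * eval t)).val [] i = _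
    rw [root_mul]
    show (eval t).val [] ((gen x).val [] i) = _
    rw [ih]; rfl

lemma sect_eval (w : List L) (i : Fin 8) : sect (eval w) i = eval (secW w i) := by
  induction w generalizing i with
  | nil => exact sect_one i
  | cons x t ih =>
    show sect (gen x * eval t) i = _
    rw [sect_mul, sect_gen, ih, ← eval_append]
    rfl

/-- The word evaluating to the section product `sprod` along an orbit. -/
def cycW : List L → Fin 8 → ℕ → List L
  | _, _, 0 => []
  | w, i, k + 1 => secW w i ++ cycW w (trc w i) k

lemma eval_cycW (w : List L) (i : Fin 8) (k : ℕ) :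
    eval (cycW w i k) = sprod (eval w) i k := by
  induction k generalizing i with
  | zero => rfl
  | succ k ih =>
    rw [cycW, eval_append, sprod_succ, sect_eval, ih, root_eval]

lemma trc_iterate (w : List L) (i : Fin 8) (k : ℕ) :
    ((eval w).val [] ·)^[k] i = (trc w ·)^[k] i := by
  induction k generalizing i with
  | zero => rfl
  | succ k ih =>
    rw [Function.iterate_succ_apply, Function.iterate_succ_apply, root_eval, ih]

/-- `na` of a single letter-section. -/
lemma na_lsec_A (i : Fin 8) : na (lsec L.A i) = if i = 0 then 1 else 0 := by
  rw [lsec]; split <;> rfl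

lemma na_lsec_B (s : Bool) (i : Fin 8) : na (lsec (L.B s) i) = 0 := by
  rw [lsec]; split
  · rfl
  · split <;> rfl

/-- Total `A`-count over all first-level sections equals the `A`-count. -/
lemma sum_na_secW (w : List L) : ∑ j : Fin 8, na (secW w j) = na w := by
  induction w with
  | nil => simp [secW, na]
  | cons x t ih =>
    have step : ∀ j, na (secW (x :: t) j) = na (lsec x j) + na (secW t (stp x j)) := by
      intro j; rw [secW, na_append]
    simp only [step]
    rw [Finset.sum_add_distrib]
    have reindex : ∑ j : Fin 8, na (secW t (stp x j)) = ∑ j : Fin 8, na (secW t j) :=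
      Equiv.sum_comp ((gen x).val [] : Equiv.Perm (Fin 8)) (fun j => na (secW t j))
    rw [reindex, ih]
    cases x with
    | A =>
      have : ∑ j : Fin 8, na (lsec L.A j) = 1 := by
        simp only [na_lsec_A]
        decide
      rw [this, na]; omega
    | B s =>
      simp only [na_lsec_B, Finset.sum_const_zero, na, Nat.zero_add]

lemma na_cycW (w : List L) (i : Fin 8) (c : ℕ) :
    na (cycW w i c) = ∑ k ∈ Finset.range c, na (secW w ((trc w ·)^[k] i)) := by
  induction c generalizing i with
  | zero => simp [cycW, na]
  | succ c ih =>
    rw [cycW, na_append, ih, Finset.sum_range_succ']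
    simp only [Function.iterate_succ_apply, Function.iterate_zero_apply]
    omega
/-! ### Order utilities and word combinatorics -/

lemma isOfFinOrder_conj {g h : Aut} (hg : IsOfFinOrder g) :
    IsOfFinOrder (h * g * h⁻¹) := by
  obtain ⟨n, hn, he⟩ := isOfFinOrder_iff_pow_eq_one.mp hg
  exact isOfFinOrder_iff_pow_eq_one.mpr ⟨n, hn, by rw [conj_pow, he, mul_one, mul_inv_cancel]⟩

lemma isOfFinOrder_swap {u v : Aut} (h : IsOfFinOrder (u * v)) :
    IsOfFinOrder (v * u) := by
  have : v * u = u⁻¹ * (u * v) * u⁻¹⁻¹ := by group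
  rw [this]
  exact isOfFinOrder_conj h

/-- The inverse of a letter. -/
def linv : L → L
  | L.A => L.A
  | L.B s => L.B (!s)

lemma gen_linv (x : L) : gen (linv x) = (gen x)⁻¹ := by
  cases x with
  | A => exact (eq_inv_of_mul_eq_one_left a_mul_a).symm ▸ rfl
  | B s =>
    cases s with
    | true => exact eq_inv_of_mul_eq_one_left b'_mul_b
    | false => exact eq_inv_of_mul_eq_one_left b_mul_b'

/-- The inverse of a word. -/
def winv (w : List L) : List L := (w.map linv).reverse

lemma eval_winv (w : List L) : eval (winv w) = (eval w)⁻¹ := by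
  induction w with
  | nil => simp [winv]
  | cons x t ih =>
    rw [winv, List.map_cons, List.reverse_cons, eval_append, eval_cons]
    show eval (winv t) * (gen (linv x) * eval []) = _
    rw [eval_nil, mul_one, ih, gen_linv, eval_cons, mul_inv_rev]

/-- Merging two adjacent letters when possible. -/
def m2 : L → L → Option (List L)
  | L.A, L.A => some []
  | L.B s, L.B t => some (if s = t then [L.B (!s)] else [])
  | _, _ => none

lemma m2_eval {x y : L} {w : List L} (h : m2 x y = some w) :
    gen x * gen y = eval w := by
  cases x with
  | A =>
    cases y with
    | A =>
      have : w = [] := by simpa [m2] using h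
      subst this
      simpa [eval, gen] using a_mul_a
    | B s => simp [m2] at h
  | B s =>
    cases y with
    | A => simp [m2] at h
    | B t =>
      have hw : w = if s = t then [L.B (!s)] else [] := by
        have := h; simp [m2] at this; exact this.symm
      subst hw
      by_cases hst : s = t
      · subst hst
        rw [if_pos rfl]
        cases s
        · simpa [eval, gen] using b'_mul_b'
        · simpa [eval, gen] using b_mul_b
      · rw [if_neg hst]
        cases s
        · cases t
          · exact absurd rfl hst
          · simpa [eval, gen] using b'_mul_b
        · cases t
          · simpa [eval, gen] using b_mul_b'
          · exact absurd rfl hst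

lemma m2_length {x y : L} {w : List L} (h : m2 x y = some w) : w.length ≤ 1 := by
  cases x <;> cases y <;> simp [m2] at h
  · subst h; simp
  · rename_i s t
    rw [← h]; split <;> simp

lemma m2_na {x y : L} {w : List L} (h : m2 x y = some w) : na w ≤ na [x, y] := by
  cases x <;> cases y <;> simp [m2] at h
  · subst h; simp [na]
  · rename_i s t
    rw [← h]; split <;> simp [na]

lemma m2_symm_some {x y : L} {w : List L} (h : m2 x y = some w) :
    ∃ w', m2 y x = some w' ∧ na w' ≤ na [x, y] ∧ w'.length ≤ 1 := by
  cases x <;> cases y <;> simp [m2] at h ⊢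
  · simp [na]
  · rename_i s t
    constructor
    · split <;> simp [na]
    · split <;> simp

/-- Either a word is reduced (no mergeable adjacent pair), or it splits. -/
lemma red_or_split (w : List L) :
    List.Chain' (fun x y => m2 x y = none) w ∨
      ∃ p x y s w', w = p ++ x :: y :: s ∧ m2 x y = some w' := by
  induction w with
  | nil => exact Or.inl List.isChain_nil
  | cons x t ih =>
    cases t with
    | nil => exact Or.inl (List.isChain_singleton x)
    | cons y r =>
      rcases h : m2 x y with _ | w'
      · rcases ih with hc | ⟨p, x', y', s, w', hw, hm⟩
        · exact Or.inl (List.isChain_cons_cons.mpr ⟨h, hc⟩)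
        · exact Or.inr ⟨x :: p, x', y', s, w', by rw [hw]; rfl, hm⟩
      · exact Or.inr ⟨[], x, y, r, w', rfl, h⟩

lemma nc_shape {x y : L} (h : m2 x y = none) :
    (x = L.A ∧ ∃ s, y = L.B s) ∨ ((∃ s, x = L.B s) ∧ y = L.A) := by
  cases x <;> cases y <;> simp [m2] at h ⊢

/-- The canonical alternating words `a b^{±1} a b^{±1} ⋯`. -/
def wordOf : List Bool → List L
  | [] => []
  | s :: E => L.A :: L.B s :: wordOf E

lemma wordOf_append (E F : List Bool) : wordOf (E ++ F) = wordOf E ++ wordOf F := by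
  induction E with
  | nil => rfl
  | cons s E ih => simp [wordOf, ih]

lemma na_wordOf (E : List Bool) : na (wordOf E) = E.length := by
  induction E with
  | nil => rfl
  | cons s E ih => simp [wordOf, na, ih]

/-- Parsing a reduced word that starts with `A` and does not end with `A`. -/
lemma parse_aux : ∀ (n : ℕ) (w : List L), w.length ≤ n →
    List.Chain' (fun x y => m2 x y = none) w →
    w.head? = some L.A → w.getLast? ≠ some L.A →
    ∃ E : List Bool, E ≠ [] ∧ w = wordOf E := by
  intro n
  induction n with
  | zero =>
    intro w hlen _ hhd _
    rw [List.length_eq_zero_iff.mp (Nat.le_zero.mp hlen)] at hhd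
    exact absurd hhd (by simp)
  | succ n ih =>
    intro w hlen hch hhd hlast
    cases w with
    | nil => exact absurd hhd (by simp)
    | cons x t =>
      have hx : x = L.A := by simpa using hhd
      subst hx
      cases t with
      | nil => exact absurd (rfl : ([L.A] : List L).getLast? = some L.A) hlast
      | cons y r =>
        have hxy : m2 L.A y = none := (List.isChain_cons_cons.mp hch).1
        obtain ⟨s, rfl⟩ : ∃ s, y = L.B s := by
          rcases nc_shape hxy with ⟨_, hs⟩ | ⟨⟨s, hy⟩, _⟩
          · exact hs
          · exact absurd hy (by simp)
        cases r with
        | nil => exact ⟨[s], by simp, rfl⟩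
        | cons z r' =>
          have hch' : List.Chain' (fun x y => m2 x y = none) (z :: r') :=
            ((List.isChain_cons_cons.mp hch).2).tail
          have hyz : m2 (L.B s) z = none :=
            (List.isChain_cons_cons.mp (List.isChain_cons_cons.mp hch).2).1
          have hz : z = L.A := by
            rcases nc_shape hyz with ⟨hy, _⟩ | ⟨_, hz⟩
            · exact absurd hy (by simp)
            · exact hz
          have hlast' : (z :: r').getLast? ≠ some L.A := by
            rw [List.getLast?_cons_cons, List.getLast?_cons_cons] at hlast
            exact hlast
          have hlen' : (z :: r').length ≤ n := by
            simp only [List.length_cons] at hlen ⊢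
            omega
          obtain ⟨E, hEne, hEw⟩ := ih (z :: r') hlen' hch' (by rw [hz]; rfl) hlast'
          exact ⟨s :: E, by simp, by rw [wordOf, ← hEw]⟩

lemma parse (w : List L) (hch : List.Chain' (fun x y => m2 x y = none) w)
    (hhd : w.head? = some L.A) (hlast : w.getLast? ≠ some L.A) :
    ∃ E : List Bool, E ≠ [] ∧ w = wordOf E :=
  parse_aux w.length w le_rfl hch hhd hlast
/-! ### The alternating-word analysis -/

lemma replicate_struct (E : List Bool) :
    (∃ u r, E = u ++ true :: false :: r) ∨
      ∃ i j, E = List.replicate i false ++ List.replicate j true := by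
  induction E with
  | nil => exact Or.inr ⟨0, 0, rfl⟩
  | cons x E ih =>
    rcases ih with ⟨u, r, rfl⟩ | ⟨i, j, rfl⟩
    · exact Or.inl ⟨x :: u, r, rfl⟩
    · cases x with
      | false => exact Or.inr ⟨i + 1, j, rfl⟩
      | true =>
        cases i with
        | zero => exact Or.inr ⟨0, j + 1, by simp [List.replicate_succ]⟩
        | succ i =>
          exact Or.inl ⟨[], List.replicate i false ++ List.replicate j true,
            by simp [List.replicate_succ]⟩

lemma exists_tf_rotation (E : List Bool) (h1 : ¬ ∀ x ∈ E, x = true)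
    (h2 : ¬ ∀ x ∈ E, x = false) :
    ∃ E₁ E₂ E₃, E = E₁ ++ E₂ ∧ E₂ ++ E₁ = true :: false :: E₃ := by
  rcases replicate_struct E with ⟨u, r, rfl⟩ | ⟨i, j, rfl⟩
  · exact ⟨u, true :: false :: r, r ++ u, rfl, by simp⟩
  · cases i with
    | zero =>
      exact absurd (fun x hx => by simpa using (List.eq_of_mem_replicate (by simpa using hx))) h1
    | succ i =>
      cases j with
      | zero =>
        refine absurd (fun x hx => ?_) h2
        rw [List.replicate_zero, List.append_nil] at hx
        exact List.eq_of_mem_replicate hx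
      | succ j =>
        refine ⟨List.replicate (i+1) false ++ List.replicate j true, [true],
          List.replicate i false ++ List.replicate j true, ?_, ?_⟩
        · rw [List.append_assoc, ← List.replicate_succ' (n := j) (a := true)]
        · simp [List.replicate_succ]

lemma eval_const_word (s : Bool) (E : List Bool) (h : ∀ x ∈ E, x = s) :
    eval (wordOf E) = (a * gen (L.B s)) ^ E.length := by
  induction E with
  | nil => rfl
  | cons t E ih =>
    have ht : t = s := h t (by simp)
    subst ht
    rw [wordOf, eval_cons, eval_cons, ih (fun x hx => h x (by simp [hx])),
      List.length_cons, pow_succ', mul_assoc]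
    rfl

lemma a_inv : a⁻¹ = a := ((eq_inv_of_mul_eq_one_left a_mul_a).symm : a⁻¹ = a)

set_option maxRecDepth 10000 in
lemma hab : IsOfFinOrder (a * b) := by
  have h : IsOfFinOrder (eval [L.A, L.B true]) := by
    apply finOrder_of_sprod
    intro i
    have hf : ((eval [L.A, L.B true]).val [] ·) = (trc [L.A, L.B true] ·) :=
      funext (root_eval [L.A, L.B true])
    have hper : ∀ j : Fin 8, (trc [L.A, L.B true] ·)^[8] j = j := by decide
    refine ⟨8, by norm_num, ?_, ?_⟩
    · rw [hf]
      exact hper i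
    · rw [← eval_cycW]
      fin_cases i
      · show IsOfFinOrder (eval (cycW [L.A, L.B true] 0 8))
        rw [(by decide : cycW [L.A, L.B true] 0 8 = [L.A, L.B false, L.B true])]
        show IsOfFinOrder (a * (b' * (b * 1)))
        rw [mul_one, b'_mul_b, mul_one]; exact ha
      · show IsOfFinOrder (eval (cycW [L.A, L.B true] 1 8))
        rw [(by decide : cycW [L.A, L.B true] 1 8 = [L.B false, L.B true, L.A])]
        show IsOfFinOrder (b' * (b * (a * 1)))
        rw [mul_one, ← mul_assoc, b'_mul_b, one_mul]; exact ha
      · show IsOfFinOrder (eval (cycW [L.A, L.B true] 2 8))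
        rw [(by decide : cycW [L.A, L.B true] 2 8 = [L.B false, L.B true, L.A])]
        show IsOfFinOrder (b' * (b * (a * 1)))
        rw [mul_one, ← mul_assoc, b'_mul_b, one_mul]; exact ha
      · show IsOfFinOrder (eval (cycW [L.A, L.B true] 3 8))
        rw [(by decide : cycW [L.A, L.B true] 3 8 = [L.A, L.B false, L.B true])]
        show IsOfFinOrder (a * (b' * (b * 1)))
        rw [mul_one, b'_mul_b, mul_one]; exact ha
      · show IsOfFinOrder (eval (cycW [L.A, L.B true] 4 8))
        rw [(by decide : cycW [L.A, L.B true] 4 8 = [L.B false, L.B true, L.A])]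
        show IsOfFinOrder (b' * (b * (a * 1)))
        rw [mul_one, ← mul_assoc, b'_mul_b, one_mul]; exact ha
      · show IsOfFinOrder (eval (cycW [L.A, L.B true] 5 8))
        rw [(by decide : cycW [L.A, L.B true] 5 8 = [L.B true, L.A, L.B false])]
        show IsOfFinOrder (b * (a * (b' * 1)))
        rw [mul_one, ← mul_assoc, b'_eq_inv]
        exact isOfFinOrder_conj ha
      · show IsOfFinOrder (eval (cycW [L.A, L.B true] 6 8))
        rw [(by decide : cycW [L.A, L.B true] 6 8 = [L.A, L.B false, L.B true])]
        show IsOfFinOrder (a * (b' * (b * 1)))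
        rw [mul_one, b'_mul_b, mul_one]; exact ha
      · show IsOfFinOrder (eval (cycW [L.A, L.B true] 7 8))
        rw [(by decide : cycW [L.A, L.B true] 7 8 = [L.B true, L.A, L.B false])]
        show IsOfFinOrder (b * (a * (b' * 1)))
        rw [mul_one, ← mul_assoc, b'_eq_inv]
        exact isOfFinOrder_conj ha
  have he : eval [L.A, L.B true] = a * b := by
    show a * (b * 1) = a * b
    rw [mul_one]
  rwa [he] at h

lemma hab' : IsOfFinOrder (a * b') := by
  have h1 : IsOfFinOrder (a * b)⁻¹ := hab.inv
  rw [mul_inv_rev, a_inv, ← b'_eq_inv] at h1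
  exact isOfFinOrder_swap h1

lemma hBfin (s : Bool) : IsOfFinOrder (a * gen (L.B s)) := by
  cases s
  · exact hab'
  · exact hab

/-- One-step rotation of a section product along an orbit. -/
lemma rot_step (g : Aut) (c : ℕ) (hc : 0 < c) (j : Fin 8)
    (hj : (g.val [] ·)^[c] j = j) (h : IsOfFinOrder (sprod g j c)) :
    IsOfFinOrder (sprod g (g.val [] j) c) := by
  obtain ⟨k, rfl⟩ : ∃ k, c = k + 1 := ⟨c - 1, by omega⟩
  have e2 : sprod g (g.val [] j) (k + 1) = sprod g (g.val [] j) k * sect g j := by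
    rw [sprod_right, ← Function.iterate_succ_apply, hj]
  rw [e2]
  exact isOfFinOrder_swap (by rw [← sprod_succ]; exact h)

lemma rot_iter (g : Aut) (c : ℕ) (hc : 0 < c) (j : Fin 8)
    (hj : (g.val [] ·)^[c] j = j) (h : IsOfFinOrder (sprod g j c)) :
    ∀ l, ((g.val [] ·)^[c] ((g.val [] ·)^[l] j) = (g.val [] ·)^[l] j) ∧
      IsOfFinOrder (sprod g ((g.val [] ·)^[l] j) c) := by
  intro l
  induction l with
  | zero => exact ⟨hj, h⟩
  | succ l ih =>
    have e : (g.val [] ·)^[l + 1] j = (g.val [] ·) ((g.val [] ·)^[l] j) :=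
      Function.iterate_succ_apply' _ l j
    rw [e]
    constructor
    · rw [← Function.iterate_succ_apply, Function.iterate_succ_apply', ih.1]
    · exact rot_step g c hc _ ih.1 ih.2
lemma perm_iterate (σ : Equiv.Perm (Fin 8)) (n : ℕ) (j : Fin 8) : (σ ·)^[n] j = (σ ^ n) j := by
  induction n generalizing j with
  | zero => rfl
  | succ n ih =>
    rw [Function.iterate_succ_apply, ih, ← Equiv.Perm.mul_apply, ← pow_succ]

lemma trc_periodic (v : List L) (j : Fin 8) : ∃ m, 0 < m ∧ (trc v ·)^[m] j = j := by
  refine ⟨orderOf ((eval v).val []), orderOf_pos _, ?_⟩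
  have hf : ((eval v).val [] ·) = (trc v ·) := funext (root_eval v)
  rw [← hf, perm_iterate, pow_orderOf_eq_one, Equiv.Perm.one_apply]

lemma minPer_pos (v : List L) (i : Fin 8) : 0 < Function.minimalPeriod (trc v ·) i := by
  obtain ⟨m, hm, hper⟩ := trc_periodic v i
  exact (show Function.IsPeriodicPt (trc v ·) m i from hper).minimalPeriod_pos hm

/-- `na` of the orbit word is a sum over distinct orbit vertices. -/
lemma na_cycW_structure (v : List L) (i : Fin 8) :
    ∃ S : Finset (Fin 8),
      (∀ j ∈ S, ∃ k, (trc v ·)^[k] i = j) ∧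
      na (cycW v i (Function.minimalPeriod (trc v ·) i)) = ∑ j ∈ S, na (secW v j) := by
  classical
  set f := (trc v ·) with hfd
  set c := Function.minimalPeriod f i with hcd
  refine ⟨(Finset.range c).image (f^[·] i), ?_, ?_⟩
  · intro j hj
    obtain ⟨k, _, rfl⟩ := Finset.mem_image.mp hj
    exact ⟨k, rfl⟩
  · have hinj : ∀ x ∈ Finset.range c, ∀ y ∈ Finset.range c, f^[x] i = f^[y] i → x = y :=
      fun x hx y hy hxy => Function.iterate_injOn_Iio_minimalPeriod
        (Set.mem_Iio.mpr (Finset.mem_range.mp hx)) (Set.mem_Iio.mpr (Finset.mem_range.mp hy)) hxy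
    rw [na_cycW]
    exact (Finset.sum_image (f := fun j => na (secW v j)) hinj).symm

lemma na_cycW_le (v : List L) (i : Fin 8) :
    na (cycW v i (Function.minimalPeriod (trc v ·) i)) ≤ na v := by
  obtain ⟨S, _, hS⟩ := na_cycW_structure v i
  rw [hS, ← sum_na_secW v]
  exact Finset.sum_le_sum_of_subset (Finset.subset_univ S)

lemma na_cycW_le_avoid (v : List L) (i : Fin 8) (h0 : ∀ k, (trc v ·)^[k] i ≠ 0) :
    na (cycW v i (Function.minimalPeriod (trc v ·) i)) + na (secW v 0) ≤ na v := by
  obtain ⟨S, hSmem, hS⟩ := na_cycW_structure v i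
  have h0S : (0 : Fin 8) ∉ S := by
    intro hmem
    obtain ⟨k, hk⟩ := hSmem 0 hmem
    exact h0 k hk
  calc na (cycW v i _) + na (secW v 0)
      = ∑ j ∈ insert (0 : Fin 8) S, na (secW v j) := by
        rw [hS, Finset.sum_insert h0S]; omega
    _ ≤ ∑ j : Fin 8, na (secW v j) :=
        Finset.sum_le_sum_of_subset (Finset.subset_univ _)
    _ = na v := sum_na_secW v

/-- The key induction step: alternating words have finite order. -/
lemma alt_case (N : ℕ)
    (IH : ∀ M, M < N → ∀ w : List L, na w ≤ M → IsOfFinOrder (eval w))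
    (E : List Bool) (hlen : E.length ≤ N) :
    IsOfFinOrder (eval (wordOf E)) := by
  classical
  by_cases hc1 : ∀ x ∈ E, x = true
  · rw [eval_const_word true E hc1]; exact (hBfin true).pow
  by_cases hc2 : ∀ x ∈ E, x = false
  · rw [eval_const_word false E hc2]; exact (hBfin false).pow
  obtain ⟨E₁, E₂, E₃, rfl, hrot⟩ := exists_tf_rotation E hc1 hc2
  have hswap : IsOfFinOrder (eval (wordOf (E₂ ++ E₁))) →
      IsOfFinOrder (eval (wordOf (E₁ ++ E₂))) := by
    rw [wordOf_append, eval_append, wordOf_append, eval_append]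
    exact isOfFinOrder_swap
  apply hswap
  rw [hrot]
  have hlen2 : E₃.length + 2 ≤ N := by
    have := congrArg List.length hrot
    simp only [List.length_append, List.length_cons] at this ⊢
    simp only [List.length_append] at hlen
    omega
  -- the rotated word
  clear hswap hrot hc1 hc2 hlen E₁ E₂
  set v := wordOf (true :: false :: E₃) with hv
  have hnav : na v = E₃.length + 2 := by
    rw [hv, na_wordOf]; simp
  apply finOrder_of_sprod
  have hf : ((eval v).val [] ·) = (trc v ·) := funext (root_eval v)
  intro i
  by_cases h0 : ∃ k, (trc v ·)^[k] i = 0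
  · -- the orbit of `i` passes through `0`: use the `a·a` cancellation there
    obtain ⟨k, hk⟩ := h0
    have base : ∃ c, 0 < c ∧ (trc v ·)^[c] 0 = 0 ∧ IsOfFinOrder (sprod (eval v) 0 c) := by
      cases E₃ with
      | nil =>
        refine ⟨1, one_pos, by decide, ?_⟩
        rw [← eval_cycW, (by decide : cycW (wordOf [true, false]) 0 1 = [L.A])]
        show IsOfFinOrder (a * 1)
        rw [mul_one]; exact ha
      | cons s E₄ =>
        refine ⟨Function.minimalPeriod (trc v ·) 0, minPer_pos v 0,
          Function.isPeriodicPt_minimalPeriod _ _, ?_⟩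
        rw [← eval_cycW]
        obtain ⟨k', hk'⟩ : ∃ k', Function.minimalPeriod (trc v ·) 0 = k' + 1 :=
          ⟨_, (Nat.succ_pred_eq_of_pos (minPer_pos v 0)).symm⟩
        have hbound : na (cycW v 0 (Function.minimalPeriod (trc v ·) 0)) ≤ na v :=
          na_cycW_le v 0
        have hcyc2 : cycW v 0 (Function.minimalPeriod (trc v ·) 0) =
            L.A :: L.A :: (secW (wordOf E₄) (stp (L.B s) 0) ++ cycW v (trc v 0) k') := by
          rw [hk']
          rfl
        rw [hcyc2]
        have hnau : na (secW (wordOf E₄) (stp (L.B s) 0) ++ cycW v (trc v 0) k') + 2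
            ≤ na v := by
          rw [hcyc2] at hbound
          simp [na] at hbound; omega
        have heval : eval (L.A :: L.A :: (secW (wordOf E₄) (stp (L.B s) 0) ++ cycW v (trc v 0) k'))
            = eval (secW (wordOf E₄) (stp (L.B s) 0) ++ cycW v (trc v 0) k') := by
          rw [eval_cons, eval_cons, ← mul_assoc]
          show a * a * _ = _
          rw [a_mul_a, one_mul]
        rw [heval]
        exact IH (N - 1) (by omega) _ (by omega)
    obtain ⟨c, hcpos, hper0, hfin0⟩ := base
    -- transfer from `0` to `i` along the orbit
    obtain ⟨m, hmpos, hmper⟩ := trc_periodic v i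
    have hmk : (trc v ·)^[m * k] i = i := iterate_period_mul _ i m hmper k
    have hkle : k ≤ m * k := Nat.le_mul_of_pos_left k hmpos
    have hl : (trc v ·)^[m * k - k] 0 = i := by
      rw [← hk, ← Function.iterate_add_apply, (by omega : m * k - k + k = m * k)]
      exact hmk
    have hrot := rot_iter (eval v) c hcpos 0 (by rw [hf]; exact hper0) hfin0 (m * k - k)
    have hiter : ((eval v).val [] ·)^[m * k - k] 0 = i := by rw [hf]; exact hl
    rw [hiter] at hrot
    exact ⟨c, hcpos, hrot.1, hrot.2⟩
  · -- the orbit of `i` avoids `0`: it misses at least one `A`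
    push_neg at h0
    refine ⟨Function.minimalPeriod (trc v ·) i, minPer_pos v i,
      by rw [hf]; exact Function.isPeriodicPt_minimalPeriod _ _, ?_⟩
    rw [← eval_cycW]
    have hb := na_cycW_le_avoid v i h0
    have hpos0 : 1 ≤ na (secW v 0) := by
      have : secW v 0 = L.A :: secW (wordOf (false :: E₃)) (stp (L.B true) 0) := rfl
      rw [this]
      show na (secW (wordOf (false :: E₃)) (stp (L.B true) 0)) + 1 ≥ 1
      omega
    exact IH (N - 1) (by omega) _ (by omega)
lemma na_cons (x : L) (t : List L) : na (x :: t) = na t + na [x] := by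
  cases x <;> simp [na]

lemma na_two (x y : L) : na [x, y] = na [x] + na [y] := by
  cases x <;> cases y <;> simp [na]

/-- Every word in the generators evaluates to an element of finite order. -/
lemma eval_finOrder_bounded : ∀ (N : ℕ) (w : List L), na w ≤ N → IsOfFinOrder (eval w) := by
  intro N
  induction N using Nat.strong_induction_on with
  | _ N IHN =>
  suffices Hl : ∀ (l : ℕ) (w : List L), w.length ≤ l → na w ≤ N → IsOfFinOrder (eval w) from
    fun w hw => Hl w.length w le_rfl hw
  intro l
  induction l with
  | zero =>
    intro w hlen _
    rw [List.length_eq_zero_iff.mp (Nat.le_zero.mp hlen)]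
    exact IsOfFinOrder.one
  | succ l IHl =>
    intro w hlen hna
    rcases red_or_split w with hch | ⟨p, x, y, s, w', rfl, hm⟩
    · -- no adjacent mergeable pair: the word is alternating
      cases w with
      | nil => exact IsOfFinOrder.one
      | cons x t =>
        rcases List.eq_nil_or_concat t with rfl | ⟨t', z, rfl⟩
        · -- a single letter
          show IsOfFinOrder (gen x * eval [])
          rw [eval_nil, mul_one]
          cases x with
          | A => exact ha
          | B s =>
            cases s with
            | true => exact hbfin
            | false => exact hb'fin
        · simp only [List.concat_eq_append] at hch hlen hna ⊢
          rcases hm2 : m2 z x with _ | w₃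
          · -- the ends do not merge either: parse as an alternating word
            rcases nc_shape hm2 with ⟨hz, sx, hx⟩ | ⟨⟨sz, hz⟩, hx⟩
            · -- w = B sx :: t' ++ [A] : rotate one step, then parse
              subst hz; subst hx
              have hchu : List.Chain' (fun a b => m2 a b = none) ((t' ++ [L.A]) ++ [L.B sx]) := by
                refine List.isChain_append.mpr ?_
                refine ⟨hch.tail, List.isChain_singleton _, ?_⟩
                intro c hc d hd
                rw [List.getLast?_concat] at hc
                simp only [List.head?_cons, Option.mem_def, Option.some_inj] at hc hd
                rw [← hc, ← hd]
                rfl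
              have hhd : ((t' ++ [L.A]) ++ [L.B sx]).head? = some L.A := by
                cases t' with
                | nil => rfl
                | cons c t₂ =>
                  have hlink : m2 (L.B sx) c = none := (List.isChain_cons_cons.mp hch).1
                  have hc : c = L.A := by
                    rcases nc_shape hlink with ⟨hBA, _⟩ | ⟨_, hcA⟩
                    · exact absurd hBA (by simp)
                    · exact hcA
                  rw [hc]
                  rfl
              have hlast : ((t' ++ [L.A]) ++ [L.B sx]).getLast? ≠ some L.A := by
                rw [List.getLast?_concat]
                simp
              obtain ⟨E, hEne, hEw⟩ := parse _ hchu hhd hlast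
              have hnaE : E.length ≤ N := by
                have h1 : na ((t' ++ [L.A]) ++ [L.B sx]) = E.length := by
                  rw [hEw, na_wordOf]
                rw [na_append, na_append] at h1
                rw [na_cons, na_append] at hna
                simp [na] at h1 hna
                omega
              have h1 : IsOfFinOrder (eval (t' ++ [L.A]) * eval [L.B sx]) := by
                rw [← eval_append, hEw]
                exact alt_case N IHN E hnaE
              have h2 := isOfFinOrder_swap h1
              rw [eval_cons, eval_nil, mul_one] at h2
              show IsOfFinOrder (eval (L.B sx :: (t' ++ [L.A])))
              rw [eval_cons]
              exact h2
            · -- w = A :: t' ++ [B sz] : parse directly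
              subst hz; subst hx
              have hhd : (L.A :: (t' ++ [L.B sz])).head? = some L.A := rfl
              have hlast : (L.A :: (t' ++ [L.B sz])).getLast? ≠ some L.A := by
                rw [show (L.A :: (t' ++ [L.B sz])) = (L.A :: t') ++ [L.B sz] from rfl,
                  List.getLast?_concat]
                simp
              obtain ⟨E, hEne, hEw⟩ := parse _ hch hhd hlast
              rw [hEw]
              refine alt_case N IHN E ?_
              rw [hEw, na_wordOf] at hna
              exact hna
          · -- the ends merge: rotate and merge, strictly shorter
            have h3 : eval (t' ++ [z]) * gen x = eval (t' ++ w₃) := by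
              rw [eval_append, eval_append, eval_cons, eval_nil, mul_one, mul_assoc,
                m2_eval hm2]
            have h4 : IsOfFinOrder (eval (t' ++ w₃)) := by
              apply IHl
              · have := m2_length hm2
                simp only [List.length_cons, List.length_append, List.length_singleton]
                  at hlen ⊢
                omega
              · have hw3 := m2_na hm2
                rw [na_cons, na_append, na_cons] at hna
                rw [na_append]
                have := na_two z x
                omega
            rw [← h3] at h4
            have h5 := isOfFinOrder_swap h4
            show IsOfFinOrder (eval (x :: (t' ++ [z])))
            rw [eval_cons]
            exact h5
    · -- an adjacent mergeable pair: merge it, strictly shorter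
      have heval : eval (p ++ x :: y :: s) = eval (p ++ (w' ++ s)) := by
        rw [eval_append, eval_append, eval_cons, eval_cons, eval_append,
          ← mul_assoc (gen x), m2_eval hm]
      rw [heval]
      have hlw : w'.length ≤ 1 := m2_length hm
      have hnw : na w' ≤ na [x, y] := m2_na hm
      apply IHl
      · simp only [List.length_append, List.length_cons] at hlen ⊢
        omega
      · rw [na_append] at hna
        rw [na_append, na_append]
        have e1 : na (x :: y :: s) = na [x] + na [y] + na s := by
          cases x <;> cases y <;> simp [na] <;> omega
        have e2 := na_two x y
        omega

lemma eval_finOrder (w : List L) : IsOfFinOrder (eval w) :=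
  eval_finOrder_bounded (na w) w le_rfl
/-- `G = ⟨a, b⟩` is a torsion group: every element has finite
order. -/
theorem stmt_10 : ∀ g ∈ G, IsOfFinOrder g := by
  intro g hg
  have hword : ∃ w : List L, eval w = g := by
    induction hg using Subgroup.closure_induction with
    | mem x hx =>
      rcases hx with rfl | rfl
      · exact ⟨[L.A], by rw [eval_cons, eval_nil, mul_one]; rfl⟩
      · exact ⟨[L.B true], by rw [eval_cons, eval_nil, mul_one]; rfl⟩
    | one => exact ⟨[], rfl⟩
    | mul x y _ _ hx hy =>
      obtain ⟨wx, rfl⟩ := hx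
      obtain ⟨wy, rfl⟩ := hy
      exact ⟨wx ++ wy, eval_append wx wy⟩
    | inv x _ hx =>
      obtain ⟨wx, rfl⟩ := hx
      exact ⟨winv wx, eval_winv wx⟩
  obtain ⟨w, rfl⟩ := hword
  exact eval_finOrder w

end T8
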